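/- For every 0 ≤ δ < 1 and every positive integer n, there exists a partially ordered set Q on n points with comp(Q) ≥ δ·n(n−1)/2 and e(Q) ≥ n!·((1−δ)/(2−δ))^n. -/

import Mathlib

/-- The number of linear extensions of a partial order `P` on `n` points:
bijections to `{1, ..., n}` (modeled as `Fin n` with its usual order) that
are strictly monotone with respect to `P`. -/
noncomputable def linExtCount (n : ℕ) (P : PartialOrder (Fin n)) : ℕ :=
  Nat.card {f : Fin n ≃ Fin n // ∀ x y : Fin n, P.lt x y → f x < f y}

/-- The number of comparable pairs of `P`: each unordered comparable pair
`{x, y}` corresponds to exactly one ordered pair `(x, y)` with `x ≺ y`. -/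
noncomputable def compCount (n : ℕ) (P : PartialOrder (Fin n)) : ℕ :=
  Nat.card {p : Fin n × Fin n // P.lt p.1 p.2}

/-- The "blocked" partial order on `Fin n`: `x ≺ y` iff the block of `x`
(elements are grouped in consecutive blocks of size `a`) is strictly below
the block of `y`. -/
def blkOrder (n a : ℕ) : PartialOrder (Fin n) where
  le x y := x = y ∨ x.val / a < y.val / a
  lt x y := x.val / a < y.val / a
  le_refl x := Or.inl rfl
  le_trans x y z hxy hyz := by
    rcases hxy with rfl | h1
    · exact hyz
    · rcases hyz with rfl | h2
      · exact Or.inr h1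
      · exact Or.inr (h1.trans h2)
  le_antisymm x y hxy hyx := by
    rcases hxy with rfl | h1
    · rfl
    · rcases hyx with rfl | h2
      · rfl
      · omega
  lt_iff_le_not_ge x y := by
    constructor
    · intro h
      refine ⟨Or.inr h, ?_⟩
      rintro (rfl | h2)
      · exact Nat.lt_irrefl _ h
      · exact Nat.lt_irrefl _ (Nat.lt_trans h h2)
    · rintro ⟨rfl | h1, h2⟩
      · exact absurd (Or.inl rfl) h2
      · exact h1

/-- Multinomial-type inequality: `(∑ sᵢ)! ≤ k^(∑ sᵢ) · ∏ sᵢ!`. -/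
lemma fact_sum_le (k : ℕ) (s : Fin k → ℕ) :
    (∑ i, s i).factorial ≤ k ^ (∑ i, s i) * ∏ i, (s i).factorial := by
  induction k with
  | zero => simp
  | succ k ih =>
    rw [Fin.sum_univ_castSucc, Fin.prod_univ_castSucc]
    set S := ∑ i : Fin k, s (Fin.castSucc i) with hS
    set t := s (Fin.last k) with ht
    have h1 : (S + t).factorial = (S + t).choose t * t.factorial * S.factorial := by
      have := Nat.choose_mul_factorial_mul_factorial (Nat.le_add_left t S)
      simpa [Nat.add_sub_cancel] using this.symm
    have hbin : (S + t).choose t * k ^ S ≤ (k + 1) ^ (S + t) := by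
      have hx : (k + 1) ^ (S + t) = ∑ i ∈ Finset.range (S + t + 1),
          k ^ i * (S + t).choose i := by
        have := add_pow k 1 (S + t)
        simpa using this
      rw [hx]
      have hmem : S ∈ Finset.range (S + t + 1) := by simp
      have hle := Finset.single_le_sum
        (f := fun i => k ^ i * (S + t).choose i)
        (fun i _ => Nat.zero_le _) hmem
      have hsymm : (S + t).choose S = (S + t).choose t := by
        simpa using Nat.choose_symm (Nat.le_add_left t S)
      calc (S + t).choose t * k ^ S = k ^ S * (S + t).choose S := by rw [hsymm]; ring
        _ ≤ _ := hle
    calc (S + t).factorial = (S + t).choose t * t.factorial * S.factorial := h1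
      _ ≤ (S + t).choose t * t.factorial * (k ^ S * ∏ i : Fin k, (s (Fin.castSucc i)).factorial) :=
          Nat.mul_le_mul_left _ (ih _)
      _ = ((S + t).choose t * k ^ S) * ((∏ i : Fin k, (s (Fin.castSucc i)).factorial) * t.factorial) := by ring
      _ ≤ (k + 1) ^ (S + t) * ((∏ i : Fin k, (s (Fin.castSucc i)).factorial) * t.factorial) :=
          Nat.mul_le_mul_right _ hbin

lemma comp_lower (n a : ℕ) (ha : 1 ≤ a) :
    n * n ≤ 2 * compCount n (blkOrder n a) + a * n := by
  classical
  set L := fun p : Fin n × Fin n => p.1.val / a < p.2.val / a with hL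
  set G := fun p : Fin n × Fin n => p.2.val / a < p.1.val / a with hG
  have hcc : compCount n (blkOrder n a) = (Finset.univ.filter L).card := by
    rw [compCount, Nat.card_eq_fintype_card, Fintype.card_subtype]
    congr 1
    exact Finset.filter_congr (fun p _ => Iff.rfl)
  have hswap : (Finset.univ.filter G).card = (Finset.univ.filter L).card := by
    apply Finset.card_bij (fun p _ => p.swap)
    · intro p hp
      simp only [hL, hG, Finset.mem_filter, Finset.mem_univ, true_and] at hp ⊢
      exact hp
    · intro p hp q hq h
      simpa [Prod.ext_iff] using congrArg Prod.swap h
    · intro p hp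
      refine ⟨p.swap, ?_, by simp⟩
      simp only [hL, hG, Finset.mem_filter, Finset.mem_univ, true_and] at hp ⊢
      exact hp
  have h0 : (Finset.univ.filter L).card + (Finset.univ.filter (fun p => ¬ L p)).card
      = n * n := by
    rw [Finset.card_filter_add_card_filter_not]
    simp
  have h1 : ((Finset.univ.filter (fun p => ¬ L p)).filter G).card
      + ((Finset.univ.filter (fun p => ¬ L p)).filter (fun p => ¬ G p)).card
      = (Finset.univ.filter (fun p => ¬ L p)).card :=
    Finset.card_filter_add_card_filter_not _
  have h2 : (Finset.univ.filter (fun p => ¬ L p)).filter G = Finset.univ.filter G := by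
    ext p
    simp only [Finset.mem_filter, Finset.mem_univ, true_and, hL, hG]
    omega
  have h3 : (Finset.univ.filter (fun p => ¬ L p)).filter (fun p => ¬ G p)
      = Finset.univ.filter (fun p : Fin n × Fin n => p.1.val / a = p.2.val / a) := by
    ext p
    simp only [Finset.mem_filter, Finset.mem_univ, true_and, hL, hG]
    omega
  have hD : (Finset.univ.filter
      (fun p : Fin n × Fin n => p.1.val / a = p.2.val / a)).card ≤ a * n := by
    rw [Finset.card_filter, Fintype.sum_prod_type]
    have hinner : ∀ x : Fin n,
        (∑ y : Fin n, if x.val / a = y.val / a then 1 else 0) ≤ a := by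
      intro x
      rw [← Finset.card_filter]
      have : (Finset.univ.filter (fun y : Fin n => x.val / a = y.val / a)).card
          ≤ (Finset.range a).card := by
        apply Finset.card_le_card_of_injOn (fun y => y.val % a)
        · intro y hy
          simp only [Finset.mem_coe, Finset.mem_range]
          exact Nat.mod_lt _ ha
        · intro y1 h1 y2 h2 hmod
          simp only [Finset.mem_coe, Finset.mem_filter, Finset.mem_univ, true_and] at h1 h2
          have hmod' : y1.val % a = y2.val % a := hmod
          have hdiv : y1.val / a = y2.val / a := h1.symm.trans h2
          have : y1.val = y2.val := by
            rw [← Nat.div_add_mod y1.val a, ← Nat.div_add_mod y2.val a, hdiv, hmod']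
          exact Fin.ext this
      simpa using this
    calc (∑ x : Fin n, ∑ y : Fin n, if x.val / a = y.val / a then 1 else 0)
        ≤ ∑ _x : Fin n, a := Finset.sum_le_sum (fun x _ => hinner x)
      _ = a * n := by simp [Finset.sum_const, mul_comm]
  rw [h2, h3] at h1
  omega

lemma ext_lower (n m a : ℕ) (ha : 1 ≤ a) (hna : n ≤ m * a) :
    n.factorial ≤ m ^ n * linExtCount n (blkOrder n a) := by
  classical
  set f : Fin n → Fin m := fun i => ⟨i.val / a, by
    rw [Nat.div_lt_iff_lt_mul ha]
    exact lt_of_lt_of_le i.isLt (by omega)⟩ with hf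
  set s : Fin m → ℕ := fun j => Fintype.card {i // f i = j} with hs
  have hsum : ∑ j, s j = n := by
    rw [hs]
    calc ∑ j, Fintype.card {i // f i = j}
        = Fintype.card ((j : Fin m) × {i // f i = j}) := Fintype.card_sigma.symm
      _ = Fintype.card (Fin n) := Fintype.card_congr (Equiv.sigmaFiberEquiv f)
      _ = n := Fintype.card_fin n
  set e : ((j : Fin m) × {i // f i = j}) ≃ Fin n := Equiv.sigmaFiberEquiv f with he
  have he1 : ∀ z : ((j : Fin m) × {i // f i = j}), f (e z) = z.1 := fun z => z.2.2
  -- the injection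
  set Φ : (∀ j : Fin m, Equiv.Perm {i // f i = j}) →
      {g : Fin n ≃ Fin n // ∀ x y : Fin n, (blkOrder n a).lt x y → g x < g y} :=
    fun p => ⟨e.symm.trans ((Equiv.Perm.sigmaCongrRightHom _ p).trans e), by
      intro x y hxy
      have hxy' : x.val / a < y.val / a := hxy
      have hfix : ∀ i : Fin n,
          f (e.symm.trans ((Equiv.Perm.sigmaCongrRightHom _ p).trans e) i) = f i := by
        intro i
        have h2 : ((Equiv.Perm.sigmaCongrRightHom _ p) (e.symm i)).1 = (e.symm i).1 := rfl
        have h3 : (e.symm i).1 = f i := by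
          have := he1 (e.symm i)
          rwa [Equiv.apply_symm_apply] at this
        calc f (e ((Equiv.Perm.sigmaCongrRightHom _ p) (e.symm i)))
            = ((Equiv.Perm.sigmaCongrRightHom _ p) (e.symm i)).1 := he1 _
          _ = f i := by rw [h2, h3]
      set g := e.symm.trans ((Equiv.Perm.sigmaCongrRightHom _ p).trans e)
      have hx : (g x).val / a = x.val / a := congrArg Fin.val (hfix x)
      have hy : (g y).val / a = y.val / a := congrArg Fin.val (hfix y)
      have : (g x).val / a < (g y).val / a := by rw [hx, hy]; exact hxy'
      by_contra hc
      push_neg at hc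
      exact absurd (Nat.div_le_div_right (c := a) (Fin.le_iff_val_le_val.mp hc)) (by omega)⟩
    with hΦ
  have hΦinj : Function.Injective Φ := by
    intro p q hpq
    have h1 : e.symm.trans ((Equiv.Perm.sigmaCongrRightHom _ p).trans e)
        = e.symm.trans ((Equiv.Perm.sigmaCongrRightHom _ q).trans e) :=
      congrArg Subtype.val hpq
    apply Equiv.Perm.sigmaCongrRightHom_injective (β := fun j => {i // f i = j})
    apply Equiv.ext
    intro z
    have h3 := Equiv.ext_iff.mp h1 (e z)
    simp only [Equiv.trans_apply, Equiv.symm_apply_apply] at h3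
    exact e.injective h3
  have hcard : Nat.card (∀ j : Fin m, Equiv.Perm {i // f i = j}) = ∏ j, (s j).factorial := by
    rw [Nat.card_eq_fintype_card, Fintype.card_pi]
    exact Finset.prod_congr rfl (fun j _ => Fintype.card_perm)
  have hle : ∏ j, (s j).factorial ≤ linExtCount n (blkOrder n a) := by
    rw [← hcard, linExtCount]
    exact Nat.card_le_card_of_injective Φ hΦinj
  calc n.factorial = (∑ j, s j).factorial := by rw [hsum]
    _ ≤ m ^ (∑ j, s j) * ∏ j, (s j).factorial := fact_sum_le m s
    _ = m ^ n * ∏ j, (s j).factorial := by rw [hsum]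
    _ ≤ m ^ n * linExtCount n (blkOrder n a) := Nat.mul_le_mul_left _ hle

theorem exists_dense_with_many_extensions (δ : ℝ) (hδ0 : 0 ≤ δ) (hδ1 : δ < 1)
    (n : ℕ) (hn : 1 ≤ n) :
    ∃ P : PartialOrder (Fin n),
      δ * ((n : ℝ) * ((n : ℝ) - 1) / 2) ≤ (compCount n P : ℝ) ∧
      (Nat.factorial n : ℝ) * ((1 - δ) / (2 - δ)) ^ n ≤ (linExtCount n P : ℝ) := by
  have h1δ : (0:ℝ) < 1 - δ := by linarith
  have h2δ : (0:ℝ) < 2 - δ := by linarith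
  set m := ⌊(2 - δ) / (1 - δ)⌋₊ with hm
  have hq2 : (2:ℝ) ≤ (2 - δ) / (1 - δ) := by
    rw [le_div_iff₀ h1δ]; linarith
  have hm2 : 2 ≤ m := Nat.le_floor (by exact_mod_cast hq2)
  have hm0 : 0 < m := by omega
  have hm0R : (0:ℝ) < (m:ℝ) := by exact_mod_cast hm0
  have hmle : (m:ℝ) ≤ (2 - δ) / (1 - δ) := Nat.floor_le (by positivity)
  have hmgt : 1 / (1 - δ) < (m:ℝ) := by
    have h := Nat.sub_one_lt_floor ((2 - δ) / (1 - δ))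
    have heq : (2 - δ) / (1 - δ) - 1 = 1 / (1 - δ) := by
      field_simp
      norm_num
    rw [heq] at h
    exact_mod_cast h
  set a := (n - 1) / m + 1 with haa
  have ha1 : 1 ≤ a := Nat.le_add_left 1 _
  have hna : n ≤ m * a := by
    have h1 : m * ((n - 1) / m) + (n - 1) % m = n - 1 := Nat.div_add_mod _ _
    have h2 : (n - 1) % m < m := Nat.mod_lt _ hm0
    have h3 : m * a = m * ((n - 1) / m) + m := by rw [haa, Nat.mul_add, Nat.mul_one]
    omega
  have hdm : (a - 1) * m ≤ n - 1 := by
    have : a - 1 = (n - 1) / m := by omega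
    rw [this]
    exact Nat.div_mul_le_self _ _
  -- real versions
  have haR : ((a:ℝ) - 1) * (m:ℝ) ≤ (n:ℝ) - 1 := by
    have h := hdm
    have h1 : ((a - 1 : ℕ) : ℝ) * ((m:ℕ) : ℝ) ≤ (((n - 1 : ℕ)) : ℝ) := by exact_mod_cast h
    rwa [Nat.cast_sub ha1, Nat.cast_sub hn, Nat.cast_one] at h1
  have hinv : 1 / (m:ℝ) < 1 - δ := by
    rw [div_lt_iff₀ hm0R]
    have := (div_lt_iff₀ h1δ).mp hmgt
    linarith
  have haBound : (a:ℝ) - 1 ≤ ((n:ℝ) - 1) * (1 - δ) := by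
    have hn1 : (0:ℝ) ≤ (n:ℝ) - 1 := by
      have : (1:ℝ) ≤ (n:ℝ) := by exact_mod_cast hn
      linarith
    have h1 : (a:ℝ) - 1 ≤ ((n:ℝ) - 1) / (m:ℝ) := by
      rw [le_div_iff₀ hm0R]; exact haR
    have h2 : ((n:ℝ) - 1) / (m:ℝ) = ((n:ℝ) - 1) * (1 / (m:ℝ)) := by ring
    calc (a:ℝ) - 1 ≤ ((n:ℝ) - 1) * (1 / (m:ℝ)) := by rw [← h2]; exact h1
      _ ≤ ((n:ℝ) - 1) * (1 - δ) := by
          apply mul_le_mul_of_nonneg_left (le_of_lt hinv) hn1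
  refine ⟨blkOrder n a, ?_, ?_⟩
  · -- comparability bound
    have hc := comp_lower n a ha1
    have hcR : (n:ℝ) * n ≤ 2 * (compCount n (blkOrder n a) : ℝ) + (a:ℝ) * n := by
      exact_mod_cast hc
    have hnR : (1:ℝ) ≤ (n:ℝ) := by exact_mod_cast hn
    nlinarith [hcR, haBound, hnR, hδ0]
  · -- extension bound
    have he := ext_lower n m a ha1 hna
    have heR : (n.factorial : ℝ) ≤ (m:ℝ) ^ n * (linExtCount n (blkOrder n a) : ℝ) := by
      exact_mod_cast he
    have hc0 : (0:ℝ) ≤ (1 - δ) / (2 - δ) := by positivity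
    have hcm : (1 - δ) / (2 - δ) ≤ 1 / (m:ℝ) := by
      rw [div_le_div_iff₀ h2δ hm0R]
      have := (le_div_iff₀ h1δ).mp hmle
      linarith
    have hpow : ((1 - δ) / (2 - δ)) ^ n ≤ (1 / (m:ℝ)) ^ n :=
      pow_le_pow_left₀ hc0 hcm n
    have hfac0 : (0:ℝ) ≤ (n.factorial : ℝ) := by positivity
    calc (n.factorial : ℝ) * ((1 - δ) / (2 - δ)) ^ n
        ≤ (n.factorial : ℝ) * (1 / (m:ℝ)) ^ n := by
          apply mul_le_mul_of_nonneg_left hpow hfac0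
      _ = (n.factorial : ℝ) / (m:ℝ) ^ n := by
          rw [one_div, inv_pow]; ring
      _ ≤ (linExtCount n (blkOrder n a) : ℝ) := by
          rw [div_le_iff₀ (pow_pos hm0R n)]
          linarith [heR]
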